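/- If Assumptions (Ã), (B̃), and (C̃) hold, then for every λ ∈ ℝ \ (closure(Δ̃((0,1])) ∪ {d̃₀}): lim_{x→0+} x (∂π̃/∂x)(x,λ)/π̃(x,λ) = 2; consequently, the limit lim_{t→∞} W(t) exists and is finite, lim_{t→∞} W'(t) = 0, and Im ρ̃₀(λ) = 1 + lim_{t→∞} W(t). -/

import Mathlib

set_option synthInstance.maxHeartbeats 1000000
set_option maxHeartbeats 1000000

noncomputable section
open MeasureTheory Set Filter Topology

namespace PaperEss

/-- The weight `w = w₁ w₂`. -/
def ww (w₁ w₂ : ℝ → ℝ) (x : ℝ) : ℝ := w₁ x * w₂ x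

/-- `π̃(x,λ) = (w₂/w₁) p̃ − |b̃|²/(d̃ − λ)`. -/
def pirT (pt : ℝ → ℝ) (bt : ℝ → ℂ) (dt : ℝ → ℝ) (w₁ w₂ : ℝ → ℝ) (l : ℂ) (x : ℝ) : ℂ :=
  ((w₂ x / w₁ x * pt x : ℝ) : ℂ) - (‖bt x‖ : ℂ) ^ 2 / ((dt x : ℂ) - l)

/-- `ρ̃(x,λ) = −2 Im(b̃ c̃̄)/(d̃ − λ) + i (1/w) (d/dx)(w π̃)`. -/
def rhoT (pt : ℝ → ℝ) (bt ct : ℝ → ℂ) (dt : ℝ → ℝ) (w₁ w₂ : ℝ → ℝ) (l : ℂ) (x : ℝ) : ℂ :=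
  -(2 * ((bt x * (starRingEnd ℂ) (ct x)).im : ℂ)) / ((dt x : ℂ) - l)
    + Complex.I * ((ww w₁ w₂ x : ℝ) : ℂ)⁻¹ *
        deriv (fun s => ((ww w₁ w₂ s : ℝ) : ℂ) * pirT pt bt dt w₁ w₂ l s) x

/-- `κ̃(x,λ) = q̃ − λ − |c̃|²/(d̃−λ) + (1/w)(w b̃̄ c̃/(d̃−λ))′ − (p̃ w₂′)′/w₁`. -/
def kapT (pt qt : ℝ → ℝ) (bt ct : ℝ → ℂ) (dt : ℝ → ℝ) (w₁ w₂ : ℝ → ℝ) (l : ℂ) (x : ℝ) : ℂ :=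
  (qt x : ℂ) - l - (‖ct x‖ : ℂ) ^ 2 / ((dt x : ℂ) - l)
    + ((ww w₁ w₂ x : ℝ) : ℂ)⁻¹ *
        deriv (fun s => ((ww w₁ w₂ s : ℝ) : ℂ) * ((starRingEnd ℂ) (bt s) * ct s)
          / ((dt s : ℂ) - l)) x
    - ((deriv (fun s => pt s * deriv w₂ s) x / w₁ x : ℝ) : ℂ)

/-- `Δ̃(x) = d̃(x) − (w₁/w₂)|b̃|²/p̃`. -/
def DelT (pt : ℝ → ℝ) (bt : ℝ → ℂ) (dt : ℝ → ℝ) (w₁ w₂ : ℝ → ℝ) (x : ℝ) : ℝ :=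
  dt x - w₁ x / w₂ x * (‖bt x‖ ^ 2 / pt x)

/-- `W(t) = 1 + e^{−t} w′(e^{−t})/w(e^{−t})` with `w = w₁ w₂`. -/
def WT (w₁ w₂ : ℝ → ℝ) (t : ℝ) : ℝ :=
  1 + Real.exp (-t) * deriv (ww w₁ w₂) (Real.exp (-t)) / ww w₁ w₂ (Real.exp (-t))

/-- **Assumption (Ã)**: smoothness and positivity on `(0,1]`. -/
structure AssAT (pt qt dt : ℝ → ℝ) (bt ct : ℝ → ℂ) (w₁ w₂ : ℝ → ℝ) : Prop where
  hp : ContDiffOn ℝ 2 pt (Ioc 0 1)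
  hd : ContDiffOn ℝ 2 dt (Ioc 0 1)
  hb : ContDiffOn ℝ 2 bt (Ioc 0 1)
  hc : ContDiffOn ℝ 1 ct (Ioc 0 1)
  hq : ContinuousOn qt (Ioc 0 1)
  hppos : ∀ x ∈ Ioc (0 : ℝ) 1, 0 < pt x
  hw1 : ContDiffOn ℝ 2 w₁ (Ioc 0 1)
  hw2 : ContDiffOn ℝ 2 w₂ (Ioc 0 1)
  hwpos : ∀ x ∈ Ioo (0 : ℝ) 1, 0 < ww w₁ w₂ x

/-- **Assumption (B̃)**: `L` is the (possibly improper) limit of `d̃` at `0+` (B̃1);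
growth bounds (B̃2); boundedness conditions (B̃3a), (B̃3b). -/
structure AssBT (pt qt dt : ℝ → ℝ) (bt ct : ℝ → ℂ) (w₁ w₂ : ℝ → ℝ) (L : EReal) : Prop where
  hB1 : Tendsto (fun x => (dt x : EReal)) (nhdsWithin 0 (Ioi 0)) (nhds L)
  hB2 : ∃ β > (0 : ℝ), ∃ γ > (0 : ℝ), ∀ x ∈ Ioc (0 : ℝ) 1,
    ‖bt x‖ / x ≤ β * (|dt x| + 1) ∧ ‖ct x‖ ≤ γ * (|dt x| + 1)
  hB3a : ∃ l : ℝ, (l : EReal) ≠ L ∧ ∃ xl ∈ Ioo (0 : ℝ) 1, ∃ M : ℝ,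
    ∀ x ∈ Ioc (0 : ℝ) xl, ‖pirT pt bt dt w₁ w₂ (l : ℂ) x‖ / x ^ 2 ≤ M
  hB3b : ∀ l : ℝ, l ∉ closure (DelT pt bt dt w₁ w₂ '' Ioc 0 1) → (l : EReal) ≠ L →
    ∃ xl ∈ Ioo (0 : ℝ) 1, ∃ M : ℝ, ∀ x ∈ Ioc (0 : ℝ) xl,
      x ^ 2 / ‖pirT pt bt dt w₁ w₂ (l : ℂ) x‖ ≤ M ∧
      ‖rhoT pt bt ct dt w₁ w₂ (l : ℂ) x‖ / x ≤ M ∧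
      ‖kapT pt qt bt ct dt w₁ w₂ (l : ℂ) x‖ ≤ M

/-- **Assumption (C̃)**: existence of the finite limits `ρ̃₀(λ)`, `κ̃₀(λ)` (C̃1)
and of `lim x² w″/w` (C̃2). -/
structure AssCT (pt qt dt : ℝ → ℝ) (bt ct : ℝ → ℂ) (w₁ w₂ : ℝ → ℝ) (L : EReal) : Prop where
  hC1 : ∀ l : ℝ, l ∉ closure (DelT pt bt dt w₁ w₂ '' Ioc 0 1) → (l : EReal) ≠ L →
    (∃ z : ℂ, Tendsto (fun x : ℝ =>
        (x : ℂ) * rhoT pt bt ct dt w₁ w₂ (l : ℂ) x / pirT pt bt dt w₁ w₂ (l : ℂ) x)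
      (nhdsWithin 0 (Ioi 0)) (nhds z)) ∧
    (∃ z : ℂ, Tendsto (fun x : ℝ =>
        (x : ℂ) ^ 2 * kapT pt qt bt ct dt w₁ w₂ (l : ℂ) x / pirT pt bt dt w₁ w₂ (l : ℂ) x)
      (nhdsWithin 0 (Ioi 0)) (nhds z))
  hC2 : ∃ z : ℝ, Tendsto (fun x : ℝ => x ^ 2 * deriv (deriv (ww w₁ w₂)) x / ww w₁ w₂ x)
    (nhdsWithin 0 (Ioi 0)) (nhds z)

/-! ### Auxiliary ODE lemmas -/

lemma eventually_gt_right {f : ℝ → ℝ} {d T : ℝ} (hf : HasDerivAt f d T) (hd : 0 < d) :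
    ∀ᶠ u in 𝓝[>] T, f T < f u := by
  have h := hasDerivAt_iff_tendsto_slope.1 hf
  have h2 : ∀ᶠ u in 𝓝[≠] T, 0 < slope f T u := h.eventually_const_lt hd
  have h3 : 𝓝[>] T ≤ 𝓝[≠] T := nhdsWithin_mono _ fun u hu => ne_of_gt hu
  filter_upwards [h3 h2, self_mem_nhdsWithin] with u hu hu'
  have h4 : 0 < u - T := sub_pos.2 hu'
  rw [slope_def_field, lt_div_iff₀ h4] at hu
  linarith

lemma forward_invariant {f d : ℝ → ℝ} {K t₀ : ℝ}
    (hf : ∀ t, t₀ ≤ t → HasDerivAt f (d t) t)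
    (hd : ∀ t, t₀ ≤ t → f t = K → 0 < d t)
    (h0 : K ≤ f t₀) : ∀ t, t₀ ≤ t → K ≤ f t := by
  by_contra hcon
  push_neg at hcon
  obtain ⟨t₂, ht₂, hft₂⟩ := hcon
  set A := {t | t₀ ≤ t ∧ t ≤ t₂ ∧ f t < K} with hA
  have hAne : A.Nonempty := ⟨t₂, ht₂, le_refl _, hft₂⟩
  have hAbdd : BddBelow A := ⟨t₀, fun u hu => hu.1⟩
  set T := sInf A with hT
  have hT0 : t₀ ≤ T := le_csInf hAne fun u hu => hu.1
  have hTt₂ : T ≤ t₂ := csInf_le hAbdd ⟨ht₂, le_refl _, hft₂⟩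
  have hfTK : K ≤ f T := by
    by_contra hlt
    push_neg at hlt
    have hTgt : t₀ < T := by
      rcases eq_or_lt_of_le hT0 with h | h
      · exact absurd (h ▸ hlt) (not_lt.2 h0)
      · exact h
    have hev : ∀ᶠ u in 𝓝 T, f u < K :=
      ((hf T hT0).continuousAt).tendsto.eventually_lt_const hlt
    obtain ⟨ε, hε, hball⟩ := Metric.eventually_nhds_iff.1 hev
    set u := max t₀ (T - ε / 2) with hu
    have hu1 : t₀ ≤ u := le_max_left _ _
    have huT : u < T := max_lt hTgt (by linarith)
    have hud : dist u T < ε := by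
      rw [Real.dist_eq, abs_lt]
      constructor <;> [skip; linarith]
      have : T - ε / 2 ≤ u := le_max_right _ _
      linarith
    have huA : u ∈ A := ⟨hu1, le_trans huT.le hTt₂, hball hud⟩
    exact absurd (csInf_le hAbdd huA) (not_le.2 huT)
  have hfreq : ∀ ε, 0 < ε → ∃ u, T < u ∧ u < T + ε ∧ f u < K := by
    intro ε hε
    have hTT : T < T + ε := by linarith
    obtain ⟨u, huA, hu⟩ := (csInf_lt_iff hAbdd hAne).1 hTT
    have hune : T ≠ u := by
      intro h
      exact absurd (h ▸ huA.2.2) (not_lt.2 hfTK)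
    exact ⟨u, lt_of_le_of_ne (csInf_le hAbdd huA) hune, hu, huA.2.2⟩
  have hfTK' : f T ≤ K := by
    by_contra hgt
    push_neg at hgt
    have hev : ∀ᶠ u in 𝓝 T, K < f u :=
      ((hf T hT0).continuousAt).tendsto.eventually_const_lt hgt
    obtain ⟨ε, hε, hball⟩ := Metric.eventually_nhds_iff.1 hev
    obtain ⟨u, hu1, hu2, hu3⟩ := hfreq ε hε
    have : dist u T < ε := by rw [Real.dist_eq, abs_lt]; constructor <;> linarith
    exact absurd (hball this) (not_lt.2 hu3.le)
  have hfTeq : f T = K := le_antisymm hfTK' hfTK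
  have hdT : 0 < d T := hd T hT0 hfTeq
  have hev := eventually_gt_right (hf T hT0) hdT
  obtain ⟨u', hu'mem, hu'sub⟩ := mem_nhdsGT_iff_exists_Ioo_subset.1 hev
  have hu'T : T < u' := hu'mem
  obtain ⟨u, hu1, hu2, hu3⟩ := hfreq (u' - T) (by linarith)
  have : f T < f u := hu'sub ⟨hu1, by linarith⟩
  rw [hfTeq] at this
  linarith

lemma mvt_lower {f d : ℝ → ℝ} {m a b : ℝ} (hab : a < b)
    (hf : ∀ t, a ≤ t → HasDerivAt f (d t) t)
    (hm : ∀ t, a ≤ t → m ≤ d t) :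
    f a + m * (b - a) ≤ f b := by
  have hc : ContinuousOn f (Icc a b) := fun t ht => ((hf t ht.1).continuousAt).continuousWithinAt
  obtain ⟨ξ, hξ, hslope⟩ := exists_hasDerivAt_eq_slope f d hab hc fun t ht => hf t ht.1.le
  have h1 := hm ξ hξ.1.le
  rw [hslope] at h1
  have hba : 0 < b - a := sub_pos.2 hab
  rw [le_div_iff₀ hba] at h1
  linarith

lemma mvt_upper {f d : ℝ → ℝ} {m a b : ℝ} (hab : a < b)
    (hf : ∀ t, a ≤ t → HasDerivAt f (d t) t)
    (hm : ∀ t, a ≤ t → d t ≤ m) :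
    f b ≤ f a + m * (b - a) := by
  have := mvt_lower (f := fun t => -f t) (d := fun t => -d t) (m := -m) hab
    (fun t ht => (hf t ht).neg) (fun t ht => neg_le_neg (hm t ht))
  beta_reduce at this
  linarith [this]

/-- If `f` has derivative `d` on `[T₀,∞)` and `d → l` at `atTop`, then `f t / t → l`. -/
lemma tendsto_div_of_deriv {f d : ℝ → ℝ} {l T₀ : ℝ}
    (hf : ∀ t, T₀ ≤ t → HasDerivAt f (d t) t)
    (hd : Tendsto d atTop (𝓝 l)) :
    Tendsto (fun t => f t / t) atTop (𝓝 l) := by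
  rw [Metric.tendsto_atTop]
  intro ε hε
  obtain ⟨T₁', hT₁'⟩ := Metric.tendsto_atTop.1 hd (ε / 4) (by positivity)
  set T₁ := max T₁' (max T₀ 1) with hT₁def
  have hT₁T₀ : T₀ ≤ T₁ := le_trans (le_max_left _ _) (le_max_right _ _)
  have hT₁1 : (1 : ℝ) ≤ T₁ := le_trans (le_max_right _ _) (le_max_right _ _)
  set C := |f T₁| + (|l| + ε / 4) * T₁ with hC
  have hC0 : 0 ≤ C := by
    have : (0:ℝ) ≤ (|l| + ε / 4) * T₁ := by positivity
    positivity
  have hT₁'le : T₁' ≤ T₁ := le_max_left _ _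
  clear_value T₁ C
  refine ⟨max (T₁ + 1) (4 * C / ε + 1), fun t ht => ?_⟩
  have ht1 : T₁ + 1 ≤ t := le_trans (le_max_left _ _) ht
  have ht2 : 4 * C / ε + 1 ≤ t := le_trans (le_max_right _ _) ht
  have htT₁ : T₁ < t := by linarith
  have htpos : 0 < t := by linarith
  obtain ⟨ξ, hξ, hslope⟩ := exists_hasDerivAt_eq_slope f d htT₁
    (fun s hs => ((hf s (le_trans hT₁T₀ hs.1)).continuousAt).continuousWithinAt)
    (fun s hs => hf s (le_trans hT₁T₀ hs.1.le))
  have hξ' : |d ξ - l| < ε / 4 := by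
    have := hT₁' ξ (le_trans hT₁'le hξ.1.le)
    rwa [Real.dist_eq] at this
  have hft : f t = f T₁ + d ξ * (t - T₁) := by
    have hne : t - T₁ ≠ 0 := ne_of_gt (by linarith)
    rw [eq_div_iff hne] at hslope
    linarith
  rw [Real.dist_eq]
  have key : f t / t - l = (f T₁ - d ξ * T₁ + (d ξ - l) * t) / t := by
    rw [hft]; field_simp; ring
  rw [key]
  have hb1 : |f T₁ - d ξ * T₁ + (d ξ - l) * t| ≤ C + |d ξ - l| * t := by
    calc |f T₁ - d ξ * T₁ + (d ξ - l) * t| ≤ |f T₁| + |d ξ| * T₁ + |d ξ - l| * t := by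
          have e1 : |d ξ * T₁| = |d ξ| * T₁ := by
            rw [abs_mul, abs_of_pos (show (0:ℝ) < T₁ by linarith)]
          have e2 : |(d ξ - l) * t| = |d ξ - l| * t := by rw [abs_mul, abs_of_pos htpos]
          linarith [abs_add_le (f T₁ - d ξ * T₁) ((d ξ - l) * t), abs_sub (f T₁) (d ξ * T₁), e1, e2]
      _ ≤ C + |d ξ - l| * t := by
          have : |d ξ| ≤ |l| + ε / 4 := by
            have := abs_sub_abs_le_abs_sub (d ξ) l
            linarith
          have hT₁pos : (0:ℝ) < T₁ := by linarith
          have := mul_le_mul_of_nonneg_right this hT₁pos.le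
          rw [hC]; linarith
  have habs : |f T₁ - d ξ * T₁ + (d ξ - l) * t| / t ≤ C / t + |d ξ - l| := by
    rw [div_add' _ _ _ (ne_of_gt htpos), div_le_div_iff_of_pos_right htpos]
    nlinarith [hb1]
  have hCt : C / t ≤ ε / 4 := by
    rw [div_le_iff₀ htpos]
    have : 4 * C / ε ≤ t - 1 := by linarith
    rw [div_le_iff₀ hε] at this
    nlinarith [this, hε, mul_pos htpos hε]
  have : |(f T₁ - d ξ * T₁ + (d ξ - l) * t) / t| = |f T₁ - d ξ * T₁ + (d ξ - l) * t| / t := by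
    rw [abs_div, abs_of_pos htpos]
  rw [this]
  have : |f T₁ - d ξ * T₁ + (d ξ - l) * t| / t ≤ ε / 4 + ε / 4 := by
    linarith [habs, hξ'.le, hCt]
  linarith

/-- Riccati equation `V' = V² − V − F` with `F → c`: solutions on a half-line
converge to a root of `v² − v − c`. -/
lemma riccati {V F : ℝ → ℝ} {c T₀ : ℝ}
    (hV : ∀ t, T₀ ≤ t → HasDerivAt V (V t ^ 2 - V t - F t) t)
    (hF : Tendsto F atTop (𝓝 c)) :
    ∃ a : ℝ, Tendsto V atTop (𝓝 a) ∧ a ^ 2 - a - c = 0 := by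
  obtain ⟨T₂', hT₂'⟩ := Metric.tendsto_atTop.1 hF 1 one_pos
  set T₂ := max T₂' T₀ with hT₂def
  have hT₂T₀ : T₀ ≤ T₂ := le_max_right _ _
  have hT₂le : T₂' ≤ T₂ := le_max_left _ _
  have hFbd : ∀ t, T₂ ≤ t → |F t| ≤ |c| + 1 := by
    intro t ht
    have h1 := hT₂' t (le_trans hT₂le ht)
    rw [Real.dist_eq] at h1
    have h2 := abs_sub_abs_le_abs_sub (F t) c
    linarith
  set K := 2 * (|c| + 3) with hK
  have hKpos : 0 < K := by positivity
  have hK3 : 3 ≤ K := by nlinarith [abs_nonneg c]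
  have hquad : ∀ v t, T₂ ≤ t → K ≤ |v| → v ^ 2 / 2 ≤ v ^ 2 - v - F t := by
    intro v t ht hv
    have hF1 := abs_le.1 (hFbd t ht)
    rcases le_or_gt K v with h | h
    · nlinarith [abs_nonneg c]
    · have hvneg : v ≤ -K := by
        rcases abs_cases v with ⟨h1, h2⟩ | ⟨h1, h2⟩
        · rw [h1] at hv; linarith
        · rw [h1] at hv; linarith
      nlinarith [abs_nonneg c]
  -- step 3: ∃ t₀ ≥ T₂ with V t₀ ≥ -K
  have hstep3 : ∃ t₀, T₂ ≤ t₀ ∧ -K ≤ V t₀ := by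
    by_contra hcon
    push_neg at hcon
    have hder : ∀ t, T₂ ≤ t → K ^ 2 / 2 ≤ V t ^ 2 - V t - F t := by
      intro t ht
      have h1 := hcon t ht
      have h2 := hquad (V t) t ht (by rw [abs_of_neg (by linarith)]; linarith)
      nlinarith
    set b := T₂ + (|V T₂| + K + 1) / (K ^ 2 / 2) with hb
    have hbpos : 0 < (|V T₂| + K + 1) / (K ^ 2 / 2) := by positivity
    have hgrow := mvt_lower (f := V) (d := fun t => V t ^ 2 - V t - F t)
      (m := K ^ 2 / 2) (a := T₂) (b := b)
      (by rw [hb]; linarith) (fun t ht => hV t (le_trans hT₂T₀ ht)) (fun t ht => hder t ht)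
    have h3 : V b < -K := hcon b (by rw [hb]; linarith)
    have hV2 : -|V T₂| ≤ V T₂ := neg_abs_le _
    have he : K ^ 2 / 2 * (b - T₂) = |V T₂| + K + 1 := by
      rw [hb]
      have : (0:ℝ) < K ^ 2 / 2 := by positivity
      field_simp
      ring
    rw [he] at hgrow
    linarith
  obtain ⟨t₀, ht₀T₂, ht₀⟩ := hstep3
  -- step 4: V t ≥ -K for t ≥ t₀
  have hlow : ∀ t, t₀ ≤ t → -K ≤ V t := by
    refine forward_invariant (d := fun t => V t ^ 2 - V t - F t)
      (fun t ht => hV t (le_trans hT₂T₀ (le_trans ht₀T₂ ht))) ?_ ht₀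
    intro t ht heq
    have hF1 := abs_le.1 (hFbd t (le_trans ht₀T₂ ht))
    show 0 < V t ^ 2 - V t - F t
    rw [heq]
    nlinarith [abs_nonneg c]
  -- step 5: V t < K for all t ≥ T₂
  have hup : ∀ t, T₂ ≤ t → V t < K := by
    intro t ht
    by_contra hge
    push_neg at hge
    have hinv : ∀ u, t ≤ u → K ≤ V u := by
      refine forward_invariant (d := fun u => V u ^ 2 - V u - F u)
        (fun u hu => hV u (le_trans hT₂T₀ (le_trans ht hu))) ?_ hge
      intro u hu heq
      have h2 := hquad (V u) u (le_trans ht hu) (by rw [heq, abs_of_pos hKpos])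
      show 0 < V u ^ 2 - V u - F u
      rw [heq] at h2 ⊢
      nlinarith
    have hginv : ∀ u, t ≤ u → HasDerivAt (fun s => (V s)⁻¹)
        (-(V u ^ 2 - V u - F u) / V u ^ 2) u := by
      intro u hu
      have hVu : V u ≠ 0 := ne_of_gt (lt_of_lt_of_le hKpos (hinv u hu))
      exact (hV u (le_trans hT₂T₀ (le_trans ht hu))).inv hVu
    have hder : ∀ u, t ≤ u → -(V u ^ 2 - V u - F u) / V u ^ 2 ≤ -(1/2) := by
      intro u hu
      have hKV := hinv u hu
      have h1 := hquad (V u) u (le_trans ht hu)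
        (by rw [abs_of_pos (lt_of_lt_of_le hKpos hKV)]; exact hKV)
      have h2 : 0 < V u ^ 2 := by nlinarith
      rw [div_le_iff₀ h2]
      nlinarith
    have hblen : (0:ℝ) < 2 / K + 1 := by positivity
    have hmvt := mvt_upper (f := fun s => (V s)⁻¹)
      (d := fun u => -(V u ^ 2 - V u - F u) / V u ^ 2) (m := -(1/2))
      (a := t) (b := t + (2 / K + 1)) (by linarith) hginv hder
    have hVt : K ≤ V t := hinv t (le_refl t)
    have h4 : (V t)⁻¹ ≤ K⁻¹ := inv_anti₀ hKpos hVt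
    have h6 : 0 < (V (t + (2 / K + 1)))⁻¹ :=
      inv_pos.2 (lt_of_lt_of_le hKpos (hinv _ (by linarith)))
    have hE : -(1/2) * (t + (2 / K + 1) - t) = -K⁻¹ - 1/2 + (K⁻¹ - 1/K) := by
      field_simp
      ring
    have hKinv : K⁻¹ - 1/K = 0 := by rw [one_div]; ring
    rw [hKinv, add_zero] at hE
    rw [hE] at hmvt
    linarith
  have hbound : ∀ t, t₀ ≤ t → |V t| ≤ K :=
    fun t ht => abs_le.2 ⟨hlow t ht, (hup t (le_trans ht₀T₂ ht)).le⟩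
  have hBle : IsBoundedUnder (· ≤ ·) atTop V :=
    ⟨K, eventually_atTop.2 ⟨t₀, fun t ht => (abs_le.1 (hbound t ht)).2⟩⟩
  have hBge : IsBoundedUnder (· ≥ ·) atTop V :=
    ⟨-K, eventually_atTop.2 ⟨t₀, fun t ht => (abs_le.1 (hbound t ht)).1⟩⟩
  set a := liminf V atTop with ha
  set b := limsup V atTop with hbb
  have hab : a ≤ b := liminf_le_limsup hBle hBge
  have hroots : ∀ v, a < v → v < b → v ^ 2 - v - c = 0 := by
    intro v hav hvb
    by_contra hne
    rcases lt_or_gt_of_ne hne with hneg | hpos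
    · set g := v ^ 2 - v - c with hg
      have hgneg : g < 0 := hneg
      obtain ⟨T₃', hT₃'⟩ := Metric.tendsto_atTop.1 hF (-g/2) (by linarith)
      set T₃ := max T₃' t₀ with hT₃def
      obtain ⟨u, hu1, hu2⟩ := (frequently_atTop.1
        (frequently_lt_of_liminf_lt hBle.isCoboundedUnder_ge hav)) T₃
      have hinv2 : ∀ s, u ≤ s → -v ≤ -V s := by
        refine forward_invariant (f := fun s => -V s)
          (d := fun s => -(V s ^ 2 - V s - F s))
          (fun s hs => (hV s (le_trans hT₂T₀ (le_trans ht₀T₂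
            (le_trans (le_trans (le_max_right _ _) hu1) hs)))).neg) ?_
          (by show -v ≤ -V u; linarith)
        intro s hs heq
        have hVs : V s = v := by
          have h9 : -V s = -v := heq
          linarith
        have hFs := hT₃' s (le_trans (le_trans (le_max_left _ _) hu1) hs)
        rw [Real.dist_eq, abs_lt] at hFs
        show 0 < -(V s ^ 2 - V s - F s)
        rw [hVs]
        nlinarith
      have hev : ∀ᶠ s in atTop, V s ≤ v :=
        eventually_atTop.2 ⟨u, fun s hs => by linarith [hinv2 s hs]⟩
      have : b ≤ v := limsup_le_of_le hBge.isCoboundedUnder_le hev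
      linarith
    · set g := v ^ 2 - v - c with hg
      have hgpos : 0 < g := hpos
      obtain ⟨T₃', hT₃'⟩ := Metric.tendsto_atTop.1 hF (g/2) (by linarith)
      set T₃ := max T₃' t₀ with hT₃def
      obtain ⟨u, hu1, hu2⟩ := (frequently_atTop.1
        (frequently_lt_of_lt_limsup hBge.isCoboundedUnder_le hvb)) T₃
      have hinv2 : ∀ s, u ≤ s → v ≤ V s := by
        refine forward_invariant (d := fun s => V s ^ 2 - V s - F s)
          (fun s hs => hV s (le_trans hT₂T₀ (le_trans ht₀T₂
            (le_trans (le_trans (le_max_right _ _) hu1) hs)))) ?_ hu2.le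
        intro s hs heq
        have hFs := hT₃' s (le_trans (le_trans (le_max_left _ _) hu1) hs)
        rw [Real.dist_eq, abs_lt] at hFs
        show 0 < V s ^ 2 - V s - F s
        have h9 : V s = v := heq
        rw [h9]
        nlinarith
      have hev : ∀ᶠ s in atTop, v ≤ V s := eventually_atTop.2 ⟨u, hinv2⟩
      have : v ≤ a := le_liminf_of_le hBle.isCoboundedUnder_ge hev
      linarith
  have haeqb : a = b := by
    by_contra hne
    have hlt : a < b := lt_of_le_of_ne hab hne
    set s := (b - a) / 4 with hs
    have hspos : 0 < s := by rw [hs]; linarith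
    have e1 := hroots (a + s) (by linarith) (by rw [hs] at *; linarith)
    have e2 := hroots (a + 2*s) (by linarith) (by rw [hs] at *; linarith)
    have e3 := hroots (a + 3*s) (by linarith) (by rw [hs] at *; linarith)
    have d1 : s * (2*a + 3*s - 1) = 0 := by linear_combination e2 - e1
    have d2 : s * (2*a + 5*s - 1) = 0 := by linear_combination e3 - e2
    have d3 : s * (2*s) = 0 := by linear_combination d2 - d1
    nlinarith
  have hVa : Tendsto V atTop (𝓝 a) :=
    tendsto_of_liminf_eq_limsup rfl haeqb.symm hBle hBge
  refine ⟨a, hVa, ?_⟩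
  have hda : Tendsto (fun t => V t ^ 2 - V t - F t) atTop (𝓝 (a ^ 2 - a - c)) :=
    ((hVa.pow 2).sub hVa).sub hF
  by_contra hne
  rcases lt_or_gt_of_ne hne with hneg | hpos
  · set g := a ^ 2 - a - c with hg
    have hgneg : g < 0 := hneg
    have hev : ∀ᶠ t in atTop, V t ^ 2 - V t - F t ≤ g / 2 :=
      (hda.eventually_lt_const (by linarith)).mono fun t ht => ht.le
    obtain ⟨T₄', hT₄'⟩ := eventually_atTop.1 hev
    set T₄ := max T₄' t₀ with hT₄def
    set bb := T₄ + (V T₄ + K + 1) / (-g/2) with hbbdef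
    have hlen : 0 < (V T₄ + K + 1) / (-g/2) := by
      have := hlow T₄ (le_max_right _ _)
      apply div_pos (by linarith) (by linarith)
    have hmvt := mvt_upper (f := V) (d := fun t => V t ^ 2 - V t - F t) (m := g/2)
      (a := T₄) (b := bb) (by rw [hbbdef]; linarith)
      (fun t ht => hV t (le_trans hT₂T₀ (le_trans ht₀T₂ (le_trans (le_max_right _ _) ht))))
      (fun t ht => hT₄' t (le_trans (le_max_left _ _) ht))
    have he : g / 2 * (bb - T₄) = -(V T₄ + K + 1) := by
      rw [hbbdef]
      have hgne : -g/2 ≠ 0 := by intro h; rw [div_eq_zero_iff] at h; rcases h with h|h <;> linarith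
      field_simp
      ring
    rw [he] at hmvt
    have := hlow bb (by rw [hbbdef]; linarith [le_max_right T₄' t₀])
    linarith
  · set g := a ^ 2 - a - c with hg
    have hgpos : 0 < g := hpos
    have hev : ∀ᶠ t in atTop, g / 2 ≤ V t ^ 2 - V t - F t :=
      (hda.eventually_const_lt (by linarith)).mono fun t ht => ht.le
    obtain ⟨T₄', hT₄'⟩ := eventually_atTop.1 hev
    set T₄ := max T₄' t₀ with hT₄def
    set bb := T₄ + (K + 1 - V T₄) / (g/2) with hbbdef
    have hlen : 0 < (K + 1 - V T₄) / (g/2) := by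
      have := hup T₄ (le_trans ht₀T₂ (le_max_right _ _))
      apply div_pos (by linarith) (by linarith)
    have hmvt := mvt_lower (f := V) (d := fun t => V t ^ 2 - V t - F t) (m := g/2)
      (a := T₄) (b := bb) (by rw [hbbdef]; linarith)
      (fun t ht => hV t (le_trans hT₂T₀ (le_trans ht₀T₂ (le_trans (le_max_right _ _) ht))))
      (fun t ht => hT₄' t (le_trans (le_max_left _ _) ht))
    have he : g / 2 * (bb - T₄) = K + 1 - V T₄ := by
      have hgne : g ≠ 0 := ne_of_gt hgpos
      rw [hbbdef]
      field_simp
      ring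
    rw [he] at hmvt
    have := hup bb (le_trans ht₀T₂ (by rw [hbbdef]; linarith [le_max_right T₄' t₀]))
    linarith

/-- Near `0+`, `|d̃| + 1` is dominated by `|d̃ − a|` for any real `a` with `(a : EReal) ≠ L`. -/
lemma dtl_bound {dt : ℝ → ℝ} {L : EReal}
    (hB1 : Tendsto (fun x => (dt x : EReal)) (𝓝[>] (0:ℝ)) (𝓝 L))
    {a : ℝ} (ha : (a : EReal) ≠ L) :
    ∃ C > (0:ℝ), ∀ᶠ x in 𝓝[>] (0:ℝ), |dt x| + 1 ≤ C * |dt x - a| := by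
  induction L with
  | bot =>
    refine ⟨2, two_pos, ?_⟩
    have h := (EReal.tendsto_nhds_bot_iff_real.1 hB1) (-(2*|a|+2))
    filter_upwards [h] with x hx
    have hx' : dt x < -(2*|a|+2) := by exact_mod_cast hx
    have h1 : |dt x| = -dt x := abs_of_neg (by nlinarith [abs_nonneg a])
    have h2 : |dt x| - |a| ≤ |dt x - a| := abs_sub_abs_le_abs_sub (dt x) a
    nlinarith [abs_nonneg a]
  | coe L₀ =>
    have haL : a ≠ L₀ := fun h => ha (by rw [h])
    have hd : Tendsto dt (𝓝[>] (0:ℝ)) (𝓝 L₀) := EReal.tendsto_coe.1 hB1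
    set η := |a - L₀| / 2 with hη
    have hηpos : 0 < η := by
      have : 0 < |a - L₀| := abs_pos.2 (sub_ne_zero.2 haL)
      positivity
    refine ⟨(|L₀| + 2*η + 1)/η, by positivity, ?_⟩
    have h := Metric.tendsto_nhds.1 hd η hηpos
    filter_upwards [h] with x hx
    rw [Real.dist_eq] at hx
    have h1 : |dt x| ≤ |L₀| + η := by
      have := abs_sub_abs_le_abs_sub (dt x) L₀
      linarith [hx.le]
    have h2 : η ≤ |dt x - a| := by
      have h3 : |a - L₀| ≤ |a - dt x| + |dt x - L₀| := abs_sub_le a (dt x) L₀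
      have h4 : |a - dt x| = |dt x - a| := abs_sub_comm a (dt x)
      rw [h4] at h3
      linarith [hx.le]
    have h4 : (|L₀| + 2*η + 1)/η * η ≤ (|L₀| + 2*η + 1)/η * |dt x - a| :=
      mul_le_mul_of_nonneg_left h2 (by positivity)
    rw [div_mul_cancel₀ _ (ne_of_gt hηpos)] at h4
    linarith
  | top =>
    refine ⟨2, two_pos, ?_⟩
    have h := (EReal.tendsto_nhds_top_iff_real.1 hB1) (2*|a|+2)
    filter_upwards [h] with x hx
    have hx' : 2*|a|+2 < dt x := by exact_mod_cast hx
    have h1 : |dt x| = dt x := abs_of_pos (by nlinarith [abs_nonneg a])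
    have h2 : |dt x| - |a| ≤ |dt x - a| := abs_sub_abs_le_abs_sub (dt x) a
    nlinarith [abs_nonneg a]


/-- **Lemma 6.4.** -/
theorem tilde_limits (pt qt dt : ℝ → ℝ) (bt ct : ℝ → ℂ) (w₁ w₂ : ℝ → ℝ) (L : EReal)
    (hA : AssAT pt qt dt bt ct w₁ w₂) (hB : AssBT pt qt dt bt ct w₁ w₂ L)
    (hC : AssCT pt qt dt bt ct w₁ w₂ L)
    (l : ℝ) (hl1 : l ∉ closure (DelT pt bt dt w₁ w₂ '' Ioc 0 1)) (hl2 : (l : EReal) ≠ L) :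
    Tendsto (fun x : ℝ =>
        (x : ℂ) * deriv (fun s => pirT pt bt dt w₁ w₂ (l : ℂ) s) x /
          pirT pt bt dt w₁ w₂ (l : ℂ) x)
      (nhdsWithin 0 (Ioi 0)) (nhds 2) ∧
    ∃ Wl : ℝ, Tendsto (WT w₁ w₂) atTop (nhds Wl) ∧
      Tendsto (deriv (WT w₁ w₂)) atTop (nhds 0) ∧
      ∀ z : ℂ, Tendsto (fun x : ℝ =>
          (x : ℂ) * rhoT pt bt ct dt w₁ w₂ (l : ℂ) x / pirT pt bt dt w₁ w₂ (l : ℂ) x)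
        (nhdsWithin 0 (Ioi 0)) (nhds z) → z.im = 1 + Wl := by
  classical
  -- the real-valued version of π̃
  set r : ℝ → ℝ := fun x => w₂ x / w₁ x * pt x - ‖bt x‖ ^ 2 / (dt x - l) with hrdef
  have hpir : ∀ y : ℝ, pirT pt bt dt w₁ w₂ (l : ℂ) y = ((r y : ℝ) : ℂ) := by
    intro y
    rw [hrdef]
    unfold pirT
    push_cast
    ring
  -- pointwise positivity facts on (0,1)
  have hw1ne : ∀ x ∈ Ioo (0:ℝ) 1, w₁ x ≠ 0 := by
    intro x hx h
    have := hA.hwpos x hx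
    rw [ww, h, zero_mul] at this
    exact lt_irrefl _ this
  have hw2ne : ∀ x ∈ Ioo (0:ℝ) 1, w₂ x ≠ 0 := by
    intro x hx h
    have := hA.hwpos x hx
    rw [ww, h, mul_zero] at this
    exact lt_irrefl _ this
  -- r does not vanish on (0,1)
  have hrne0 : ∀ x ∈ Ioo (0:ℝ) 1, r x ≠ 0 := by
    intro x hx hr0
    have hp := hA.hppos x (Ioo_subset_Ioc_self hx)
    have h1 := hw1ne x hx
    have h2 := hw2ne x hx
    rw [hrdef] at hr0
    simp only at hr0
    by_cases hdl : dt x = l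
    · rw [hdl, sub_self, div_zero, sub_zero] at hr0
      exact (mul_ne_zero (div_ne_zero h2 h1) (ne_of_gt hp)) hr0
    · apply hl1
      apply subset_closure
      refine ⟨x, Ioo_subset_Ioc_self hx, ?_⟩
      have hsub : dt x - l ≠ 0 := sub_ne_zero.2 hdl
      rw [DelT]
      set B := ‖bt x‖ ^ 2 with hBdef
      have hkey : B * w₁ x = w₂ x * pt x * (dt x - l) := by
        field_simp at hr0
        linarith
      rw [hBdef] at hkey
      field_simp
      linear_combination -hkey
  -- regularity of w := ww w₁ w₂ on the open interval
  have hwwC : ContDiffOn ℝ 2 (ww w₁ w₂) (Ioo 0 1) := by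
    have h1 := hA.hw1.mono (Ioo_subset_Ioc_self : Ioo (0:ℝ) 1 ⊆ Ioc 0 1)
    have h2 := hA.hw2.mono (Ioo_subset_Ioc_self : Ioo (0:ℝ) 1 ⊆ Ioc 0 1)
    exact h1.mul h2
  have hwd : ∀ x ∈ Ioo (0:ℝ) 1, HasDerivAt (ww w₁ w₂) (deriv (ww w₁ w₂) x) x := by
    intro x hx
    exact ((hwwC.contDiffAt (isOpen_Ioo.mem_nhds hx)).differentiableAt
      (by norm_num)).hasDerivAt
  have hwdC : ContDiffOn ℝ 1 (deriv (ww w₁ w₂)) (Ioo 0 1) :=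
    hwwC.deriv_of_isOpen isOpen_Ioo (by norm_num)
  have hwd2 : ∀ x ∈ Ioo (0:ℝ) 1, HasDerivAt (deriv (ww w₁ w₂))
      (deriv (deriv (ww w₁ w₂)) x) x := by
    intro x hx
    exact ((hwdC.contDiffAt (isOpen_Ioo.mem_nhds hx)).differentiableAt
      (by norm_num)).hasDerivAt
  -- differentiability of r where dt x ≠ l
  have hdiffr : ∀ x ∈ Ioo (0:ℝ) 1, dt x ≠ l → HasDerivAt r (deriv r x) x := by
    intro x hx hne
    have hmem : Ioc (0:ℝ) 1 ∈ 𝓝 x := mem_of_superset (isOpen_Ioo.mem_nhds hx) Ioo_subset_Ioc_self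
    have hw1d : DifferentiableAt ℝ w₁ x :=
      (hA.hw1.contDiffAt hmem).differentiableAt (by norm_num)
    have hw2d : DifferentiableAt ℝ w₂ x :=
      (hA.hw2.contDiffAt hmem).differentiableAt (by norm_num)
    have hptd : DifferentiableAt ℝ pt x :=
      (hA.hp.contDiffAt hmem).differentiableAt (by norm_num)
    have hdtd : DifferentiableAt ℝ dt x :=
      (hA.hd.contDiffAt hmem).differentiableAt (by norm_num)
    have hbtd : DifferentiableAt ℝ bt x :=
      (hA.hb.contDiffAt hmem).differentiableAt (by norm_num)
    have hnbd : DifferentiableAt ℝ (fun y => ‖bt y‖ ^ 2) x := by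
      have heq : (fun y => ‖bt y‖ ^ 2)
          = fun y => (bt y).re * (bt y).re + (bt y).im * (bt y).im := by
        funext y
        rw [Complex.sq_norm, Complex.normSq_apply]
      have hre : DifferentiableAt ℝ (fun y => (bt y).re) x :=
        (Complex.reCLM.differentiableAt).comp x hbtd
      have him : DifferentiableAt ℝ (fun y => (bt y).im) x :=
        (Complex.imCLM.differentiableAt).comp x hbtd
      rw [heq]
      exact (hre.mul hre).add (him.mul him)
    have : DifferentiableAt ℝ r x := by
      rw [hrdef]
      exact ((hw2d.div hw1d (hw1ne x hx)).mul hptd).sub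
        (hnbd.div (hdtd.sub_const l) (sub_ne_zero.2 hne))
    exact this.hasDerivAt
  -- growth constants
  obtain ⟨β, hβpos, γ, hγpos, hbc⟩ := hB.hB2
  obtain ⟨Cl, hClpos, hCl⟩ := dtl_bound hB.hB1 hl2
  have hE1 : ∀ᶠ x in 𝓝[>] (0:ℝ), x ∈ Ioo (0:ℝ) 1 :=
    Ioo_mem_nhdsGT_of_mem ⟨le_refl 0, one_pos⟩
  have hEne : ∀ᶠ x in 𝓝[>] (0:ℝ), dt x ≠ l := by
    filter_upwards [hCl] with x hx h
    rw [h, sub_self, abs_zero, mul_zero] at hx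
    linarith [abs_nonneg l]
  -- lower bound on |r|
  obtain ⟨xb, hxb, Mb, hMb⟩ := hB.hB3b l hl1 hl2
  have hnorm_pir : ∀ x, ‖pirT pt bt dt w₁ w₂ (l:ℂ) x‖ = |r x| := by
    intro x
    rw [hpir x, Complex.norm_real, Real.norm_eq_abs]
  have hMbpos : 0 < Mb := by
    have hhalf : xb/2 ∈ Ioc (0:ℝ) xb := ⟨by linarith [hxb.1], by linarith [hxb.1]⟩
    have hhalf1 : xb/2 ∈ Ioo (0:ℝ) 1 := ⟨by linarith [hxb.1], by linarith [hxb.2]⟩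
    have h1 := (hMb _ hhalf).1
    rw [hnorm_pir] at h1
    have h2 : 0 < |r (xb/2)| := abs_pos.2 (hrne0 _ hhalf1)
    have h3 : 0 < (xb/2)^2 := pow_pos (by linarith [hxb.1]) 2
    calc (0:ℝ) < (xb/2)^2/|r (xb/2)| := div_pos h3 h2
    _ ≤ Mb := h1
  have hElow : ∀ᶠ x in 𝓝[>] (0:ℝ), x^2/Mb ≤ |r x| := by
    have hEb : ∀ᶠ x in 𝓝[>] (0:ℝ), x ∈ Ioo (0:ℝ) xb :=
      Ioo_mem_nhdsGT_of_mem ⟨le_refl 0, hxb.1⟩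
    filter_upwards [hEb, hE1] with x hx hx1
    have h1 := (hMb x ⟨hx.1, hx.2.le⟩).1
    rw [hnorm_pir] at h1
    have h2 : 0 < |r x| := abs_pos.2 (hrne0 x hx1)
    rw [div_le_iff₀ h2] at h1
    rw [div_le_iff₀ hMbpos]
    nlinarith [h1]
  -- upper bound on |r|
  obtain ⟨lam0, hlam0L, xa, hxa, M₀, hM₀⟩ := hB.hB3a
  obtain ⟨Ca, hCapos, hCa⟩ := dtl_bound hB.hB1 hlam0L
  set r0 : ℝ → ℝ := fun x => w₂ x / w₁ x * pt x - ‖bt x‖ ^ 2 / (dt x - lam0) with hr0def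
  have hpir0 : ∀ y : ℝ, pirT pt bt dt w₁ w₂ (lam0 : ℂ) y = ((r0 y : ℝ) : ℂ) := by
    intro y; rw [hr0def]; unfold pirT; push_cast; ring
  set Mu := |M₀| + β^2 * |lam0 - l| * Ca * Cl + 1 with hMudef
  have hMupos : 0 < Mu := by
    have hmid : 0 ≤ β^2 * |lam0 - l| * Ca * Cl :=
      mul_nonneg (mul_nonneg (mul_nonneg (sq_nonneg β) (abs_nonneg _)) hCapos.le) hClpos.le
    have := abs_nonneg M₀
    rw [hMudef]
    linarith
  have hEupp : ∀ᶠ x in 𝓝[>] (0:ℝ), |r x| ≤ Mu * x^2 := by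
    have hEa : ∀ᶠ x in 𝓝[>] (0:ℝ), x ∈ Ioo (0:ℝ) xa :=
      Ioo_mem_nhdsGT_of_mem ⟨le_refl 0, hxa.1⟩
    filter_upwards [hEa, hE1, hCl, hCa] with x hx hx1 hdl hda
    have hxpos : 0 < x := hx1.1
    have hD1 : (1:ℝ) ≤ |dt x| + 1 := by linarith [abs_nonneg (dt x)]
    have hlne : dt x ≠ l := by
      intro h; rw [h, sub_self, abs_zero, mul_zero] at hdl; linarith [abs_nonneg l]
    have hane : dt x ≠ lam0 := by
      intro h; rw [h, sub_self, abs_zero, mul_zero] at hda; linarith [abs_nonneg lam0]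
    have hlpos : 0 < |dt x - l| := abs_pos.2 (sub_ne_zero.2 hlne)
    have hapos : 0 < |dt x - lam0| := abs_pos.2 (sub_ne_zero.2 hane)
    have hr0b : |r0 x| ≤ |M₀| * x^2 := by
      have h1 := hM₀ x ⟨hx.1, hx.2.le⟩
      have h2 : ‖pirT pt bt dt w₁ w₂ (lam0:ℂ) x‖ = |r0 x| := by
        rw [hpir0 x, Complex.norm_real, Real.norm_eq_abs]
      rw [h2] at h1
      have h3 : 0 < x^2 := by positivity
      rw [div_le_iff₀ h3] at h1
      calc |r0 x| ≤ M₀ * x^2 := h1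
      _ ≤ |M₀| * x^2 := by nlinarith [le_abs_self M₀]
    have hnb : ‖bt x‖^2 ≤ β^2 * x^2 * (|dt x| + 1)^2 := by
      have h1 := (hbc x (Ioo_subset_Ioc_self hx1)).1
      rw [div_le_iff₀ hxpos] at h1
      nlinarith [norm_nonneg (bt x)]
    have hdiffid : r x - r0 x = ‖bt x‖^2 * (lam0 - l) / ((dt x - lam0) * (dt x - l)) := by
      have hane' : dt x - lam0 ≠ 0 := sub_ne_zero.2 hane
      have hlne' : dt x - l ≠ 0 := sub_ne_zero.2 hlne
      rw [hrdef, hr0def]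
      simp only
      field_simp
      ring
    have habs : |r x - r0 x| = ‖bt x‖^2 * |lam0 - l| / (|dt x - lam0| * |dt x - l|) := by
      rw [hdiffid, abs_div, abs_mul, abs_mul,
        abs_of_nonneg (by positivity : (0:ℝ) ≤ ‖bt x‖^2)]
    have hkey2 : (|dt x| + 1)^2 ≤ (Ca * Cl) * (|dt x - lam0| * |dt x - l|) := by
      have := mul_le_mul hda hdl (by positivity) (mul_nonneg hCapos.le (abs_nonneg _))
      nlinarith [this]
    have hbnd : |r x - r0 x| ≤ β^2 * |lam0 - l| * Ca * Cl * x^2 := by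
      have hPpos : 0 < |dt x - lam0| * |dt x - l| := mul_pos hapos hlpos
      rw [habs, div_le_iff₀ hPpos]
      have s1 : ‖bt x‖^2 * |lam0 - l| ≤ β^2*x^2*(|dt x|+1)^2 * |lam0 - l| :=
        mul_le_mul_of_nonneg_right hnb (abs_nonneg _)
      have s2 : β^2*x^2*|lam0 - l| * (|dt x|+1)^2
          ≤ β^2*x^2*|lam0 - l| * ((Ca*Cl)*(|dt x - lam0| * |dt x - l|)) :=
        mul_le_mul_of_nonneg_left hkey2 (by positivity)
      nlinarith [s1, s2]
    have htri : |r x| - |r0 x| ≤ |r x - r0 x| := abs_sub_abs_le_abs_sub _ _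
    rw [hMudef]
    nlinarith [htri, hr0b, hbnd, sq_nonneg x]
  -- the function s̃(x) = x w'/w + x r'/r and the imaginary part of x ρ̃/π̃
  set sfn : ℝ → ℝ :=
    fun x => x * deriv (ww w₁ w₂) x / ww w₁ w₂ x + x * deriv r x / r x with hsdef
  have hIm : ∀ᶠ x : ℝ in 𝓝[>] (0:ℝ),
      ((x:ℂ) * rhoT pt bt ct dt w₁ w₂ (l:ℂ) x / pirT pt bt dt w₁ w₂ (l:ℂ) x).im = sfn x := by
    filter_upwards [hE1, hEne] with x hx1 hne
    have hwx : 0 < ww w₁ w₂ x := hA.hwpos x hx1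
    have hrnex : r x ≠ 0 := hrne0 x hx1
    have hrx : HasDerivAt r (deriv r x) x := hdiffr x hx1 hne
    have hwr : HasDerivAt (fun y => ww w₁ w₂ y * r y)
        (deriv (ww w₁ w₂) x * r x + ww w₁ w₂ x * deriv r x) x := (hwd x hx1).mul hrx
    have hfeq : (fun y : ℝ => ((ww w₁ w₂ y : ℝ):ℂ) * pirT pt bt dt w₁ w₂ (l:ℂ) y)
        = fun y : ℝ => (((ww w₁ w₂ y * r y : ℝ)):ℂ) := by
      funext y
      rw [hpir y]
      push_cast
      ring
    have hderc : deriv (fun y : ℝ => ((ww w₁ w₂ y : ℝ):ℂ) * pirT pt bt dt w₁ w₂ (l:ℂ) y) x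
        = ((deriv (ww w₁ w₂) x * r x + ww w₁ w₂ x * deriv r x : ℝ) : ℂ) := by
      rw [hfeq]
      exact hwr.ofReal_comp.deriv
    have hrho : rhoT pt bt ct dt w₁ w₂ (l:ℂ) x
        = (((-(2 * (bt x * (starRingEnd ℂ) (ct x)).im) / (dt x - l) : ℝ)):ℂ)
          + (((deriv (ww w₁ w₂) x * r x + ww w₁ w₂ x * deriv r x) / ww w₁ w₂ x : ℝ):ℂ)
            * Complex.I := by
      unfold rhoT
      rw [hderc]
      push_cast
      ring
    have hgoal : (x:ℂ) * rhoT pt bt ct dt w₁ w₂ (l:ℂ) x / pirT pt bt dt w₁ w₂ (l:ℂ) x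
        = ((x * (-(2 * (bt x * (starRingEnd ℂ) (ct x)).im) / (dt x - l)) / r x : ℝ):ℂ)
          + ((x * ((deriv (ww w₁ w₂) x * r x + ww w₁ w₂ x * deriv r x) / ww w₁ w₂ x)
              / r x : ℝ):ℂ) * Complex.I := by
      rw [hrho, hpir x]
      push_cast
      ring
    rw [hgoal]
    simp only [Complex.add_im, Complex.ofReal_im, Complex.mul_im, Complex.I_im, Complex.I_re,
      Complex.ofReal_re, mul_zero, mul_one, zero_add, zero_mul, add_zero]
    rw [hsdef]
    simp only
    field_simp
  obtain ⟨⟨ρ₀, hρ₀⟩, -⟩ := hC.hC1 l hl1 hl2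
  have hμten : Tendsto (fun x : ℝ => ((x:ℂ) * rhoT pt bt ct dt w₁ w₂ (l:ℂ) x
      / pirT pt bt dt w₁ w₂ (l:ℂ) x).im) (𝓝[>] (0:ℝ)) (𝓝 ρ₀.im) :=
    (Complex.continuous_im.tendsto ρ₀).comp hρ₀
  have hstend : Tendsto sfn (𝓝[>] (0:ℝ)) (𝓝 ρ₀.im) := hμten.congr' hIm
  -- choose δ
  have hEall : ∀ᶠ x in 𝓝[>] (0:ℝ), x ∈ Ioo (0:ℝ) 1 ∧ dt x ≠ l
      ∧ x^2/Mb ≤ |r x| ∧ |r x| ≤ Mu * x^2 := by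
    filter_upwards [hE1, hEne, hElow, hEupp] with x h1 h2 h3 h4
    exact ⟨h1, h2, h3, h4⟩
  obtain ⟨δ, hδmem, hδsub⟩ := mem_nhdsGT_iff_exists_Ioo_subset.1 hEall
  have hδpos : 0 < δ := hδmem
  set T₀ := -Real.log δ + 1 with hT₀def
  have hmap : ∀ t, T₀ ≤ t → Real.exp (-t) ∈ Ioo (0:ℝ) δ := by
    intro t ht
    refine ⟨Real.exp_pos _, ?_⟩
    rw [← Real.exp_log hδpos]
    apply Real.exp_lt_exp.2
    rw [hT₀def] at ht
    linarith
  have hprop : ∀ t, T₀ ≤ t → (Real.exp (-t) ∈ Ioo (0:ℝ) 1 ∧ dt (Real.exp (-t)) ≠ l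
      ∧ (Real.exp (-t))^2/Mb ≤ |r (Real.exp (-t))|
      ∧ |r (Real.exp (-t))| ≤ Mu * (Real.exp (-t))^2) :=
    fun t ht => hδsub (hmap t ht)
  -- logarithmic variable
  set V : ℝ → ℝ :=
    fun t => Real.exp (-t) * deriv (ww w₁ w₂) (Real.exp (-t)) / ww w₁ w₂ (Real.exp (-t))
    with hVdef
  set F : ℝ → ℝ :=
    fun t => (Real.exp (-t))^2 * deriv (deriv (ww w₁ w₂)) (Real.exp (-t))
      / ww w₁ w₂ (Real.exp (-t)) with hFdef
  have hWTV : ∀ t, WT w₁ w₂ t = 1 + V t := fun t => rfl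
  have hexp : ∀ t : ℝ, HasDerivAt (fun u : ℝ => Real.exp (-u)) (-Real.exp (-t)) t := by
    intro t
    have h := (Real.hasDerivAt_exp (-t)).comp t ((hasDerivAt_id t).neg)
    simpa [Function.comp_def] using h
  have hVd : ∀ t, T₀ ≤ t → HasDerivAt V (V t^2 - V t - F t) t := by
    intro t ht
    obtain ⟨hx1, hne, hlo, hhi⟩ := hprop t ht
    set x := Real.exp (-t) with hxdef
    have hwx : 0 < ww w₁ w₂ x := hA.hwpos x hx1
    have hg : HasDerivAt (fun y => y * deriv (ww w₁ w₂) y / ww w₁ w₂ y)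
        (((1 * deriv (ww w₁ w₂) x + x * deriv (deriv (ww w₁ w₂)) x) * ww w₁ w₂ x
          - x * deriv (ww w₁ w₂) x * deriv (ww w₁ w₂) x) / ww w₁ w₂ x ^ 2) x :=
      ((hasDerivAt_id x).mul (hwd2 x hx1)).div (hwd x hx1) (ne_of_gt hwx)
    have hcomp := hg.comp t (hexp t)
    have hVt : V t = x * deriv (ww w₁ w₂) x / ww w₁ w₂ x := rfl
    have hFt : F t = x^2 * deriv (deriv (ww w₁ w₂)) x / ww w₁ w₂ x := rfl
    have hval : (((1 * deriv (ww w₁ w₂) x + x * deriv (deriv (ww w₁ w₂)) x) * ww w₁ w₂ x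
          - x * deriv (ww w₁ w₂) x * deriv (ww w₁ w₂) x) / ww w₁ w₂ x ^ 2) * (-x)
        = V t^2 - V t - F t := by
      rw [hVt, hFt]
      field_simp
      ring
    have hcomp' : HasDerivAt V (((1 * deriv (ww w₁ w₂) x + x * deriv (deriv (ww w₁ w₂)) x)
        * ww w₁ w₂ x - x * deriv (ww w₁ w₂) x * deriv (ww w₁ w₂) x) / ww w₁ w₂ x ^ 2 * (-x))
        t := hcomp
    rwa [hval] at hcomp'
  have hexptend : Tendsto (fun t : ℝ => Real.exp (-t)) atTop (𝓝[>] (0:ℝ)) := by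
    apply tendsto_nhdsWithin_of_tendsto_nhds_of_eventually_within
    · exact Real.tendsto_exp_atBot.comp tendsto_neg_atTop_atBot
    · exact Eventually.of_forall fun t => Real.exp_pos _
  obtain ⟨c, hc2⟩ := hC.hC2
  have hFtend : Tendsto F atTop (𝓝 c) := hc2.comp hexptend
  obtain ⟨a, hVa, hroot⟩ := riccati hVd hFtend
  -- logarithmic averaging identifies the limit
  set Lg : ℝ → ℝ := fun t => Real.log (r (Real.exp (-t))) with hLgdef
  set S : ℝ → ℝ := fun t => sfn (Real.exp (-t)) with hSdef
  have hLd : ∀ t, T₀ ≤ t → HasDerivAt Lg (V t - S t) t := by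
    intro t ht
    obtain ⟨hx1, hne, hlo, hhi⟩ := hprop t ht
    set x := Real.exp (-t) with hxdef
    have hrnex : r x ≠ 0 := hrne0 x hx1
    have hwx : 0 < ww w₁ w₂ x := hA.hwpos x hx1
    have hwne : ww w₁ w₂ x ≠ 0 := ne_of_gt hwx
    have hrx : HasDerivAt r (deriv r x) x := hdiffr x hx1 hne
    have hcomp : HasDerivAt (fun u => r (Real.exp (-u))) (deriv r x * (-x)) t :=
      HasDerivAt.comp (h := fun u : ℝ => Real.exp (-u)) t hrx (hexp t)
    have hlog := (Real.hasDerivAt_log hrnex).comp t hcomp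
    have hVt : V t = x * deriv (ww w₁ w₂) x / ww w₁ w₂ x := rfl
    have hSt : S t = x * deriv (ww w₁ w₂) x / ww w₁ w₂ x + x * deriv r x / r x := rfl
    have hval : (r x)⁻¹ * (deriv r x * (-x)) = V t - S t := by
      rw [hVt, hSt]
      field_simp
      ring
    have hlog' : HasDerivAt Lg ((r x)⁻¹ * (deriv r x * (-x))) t := hlog
    rwa [hval] at hlog'
  have hStend : Tendsto S atTop (𝓝 ρ₀.im) := hstend.comp hexptend
  have hDtend : Tendsto (fun t => V t - S t) atTop (𝓝 (a - ρ₀.im)) := hVa.sub hStend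
  have hL1 : Tendsto (fun t => Lg t / t) atTop (𝓝 (a - ρ₀.im)) :=
    tendsto_div_of_deriv hLd hDtend
  have hconst : ∀ C : ℝ, Tendsto (fun t : ℝ => (C - 2*t)/t) atTop (𝓝 (-2)) := by
    intro C
    have h1 : Tendsto (fun t : ℝ => C/t - 2) atTop (𝓝 (0 - 2)) :=
      (tendsto_const_nhds.div_atTop tendsto_id).sub tendsto_const_nhds
    rw [zero_sub] at h1
    apply h1.congr'
    filter_upwards [eventually_ge_atTop (1:ℝ)] with t ht
    have htne : t ≠ 0 := by linarith
    field_simp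
  have hLbd : ∀ᶠ t in atTop, (Real.log (1/Mb) - 2*t)/t ≤ Lg t / t
      ∧ Lg t / t ≤ (Real.log Mu - 2*t)/t := by
    filter_upwards [eventually_ge_atTop (max T₀ 1)] with t ht
    have hT := le_trans (le_max_left _ _) ht
    have h1t : (1:ℝ) ≤ t := le_trans (le_max_right _ _) ht
    have htpos : (0:ℝ) < t := by linarith
    obtain ⟨hx1, hne, hlo, hhi⟩ := hprop t hT
    set x := Real.exp (-t) with hxdef
    have hrpos : 0 < |r x| := abs_pos.2 (hrne0 x hx1)
    have hLg : Lg t = Real.log |r x| := by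
      rw [hLgdef]
      simp only
      rw [Real.log_abs]
    have hxlog : Real.log x = -t := by rw [hxdef, Real.log_exp]
    have hx2log : Real.log (x^2) = -(2*t) := by
      rw [Real.log_pow, hxlog]
      push_cast
      ring
    have hup2 : Real.log |r x| ≤ Real.log Mu - 2*t := by
      have h := Real.log_le_log hrpos hhi
      rw [Real.log_mul (ne_of_gt hMupos) (by positivity : (x:ℝ)^2 ≠ 0), hx2log] at h
      linarith
    have hlo2 : Real.log (1/Mb) - 2*t ≤ Real.log |r x| := by
      have h0 : (0:ℝ) < x^2/Mb := by positivity
      have h := Real.log_le_log h0 hlo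
      rw [Real.log_div (by positivity : (x:ℝ)^2 ≠ 0) (ne_of_gt hMbpos), hx2log] at h
      rw [Real.log_div one_ne_zero (ne_of_gt hMbpos), Real.log_one]
      linarith
    rw [hLg]
    constructor
    · exact (div_le_div_iff_of_pos_right htpos).2 hlo2
    · exact (div_le_div_iff_of_pos_right htpos).2 hup2
  have hL2 : Tendsto (fun t => Lg t / t) atTop (𝓝 (-2)) :=
    tendsto_of_tendsto_of_tendsto_of_le_of_le' (hconst (Real.log (1/Mb))) (hconst (Real.log Mu))
      (hLbd.mono fun t h => h.1) (hLbd.mono fun t h => h.2)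
  have haμ : a - ρ₀.im = -2 := tendsto_nhds_unique hL1 hL2
  -- transfer back to x → 0⁺
  have hneglog : Tendsto (fun x : ℝ => -Real.log x) (𝓝[>] (0:ℝ)) atTop :=
    tendsto_neg_atBot_atTop.comp Real.tendsto_log_nhdsGT_zero
  have hVx : Tendsto (fun x => x * deriv (ww w₁ w₂) x / ww w₁ w₂ x) (𝓝[>] (0:ℝ)) (𝓝 a) := by
    have h := hVa.comp hneglog
    apply h.congr'
    filter_upwards [self_mem_nhdsWithin] with x hx
    have hxpos : (0:ℝ) < x := hx
    show V (-Real.log x) = x * deriv (ww w₁ w₂) x / ww w₁ w₂ x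
    rw [hVdef]
    simp only
    rw [neg_neg, Real.exp_log hxpos]
  have hPtend : Tendsto (fun x => x * deriv r x / r x) (𝓝[>] (0:ℝ)) (𝓝 2) := by
    have h := hstend.sub hVx
    have h2 : ρ₀.im - a = 2 := by linarith
    rw [h2] at h
    apply h.congr
    intro x
    rw [hsdef]
    simp only
    ring
  constructor
  · have h2 : Tendsto (fun x : ℝ => ((x * deriv r x / r x : ℝ) : ℂ)) (𝓝[>] (0:ℝ)) (𝓝 2) := by
      have h := (Complex.continuous_ofReal.tendsto 2).comp hPtend
      have h3 : ((2:ℝ):ℂ) = (2:ℂ) := by norm_num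
      rw [h3] at h
      exact h
    apply h2.congr'
    filter_upwards [hE1, hEne] with x hx1 hne
    have hrx : HasDerivAt r (deriv r x) x := hdiffr x hx1 hne
    have hfeq : (fun s' : ℝ => pirT pt bt dt w₁ w₂ (l:ℂ) s') = fun s' : ℝ => ((r s' : ℝ):ℂ) :=
      funext hpir
    rw [hfeq, hrx.ofReal_comp.deriv, hpir x]
    push_cast
    ring
  · refine ⟨1 + a, ?_, ?_, ?_⟩
    · have h : Tendsto (fun t => 1 + V t) atTop (𝓝 (1 + a)) := tendsto_const_nhds.add hVa
      apply h.congr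
      intro t
      exact (hWTV t).symm
    · have hWTd : ∀ t, T₀ ≤ t → HasDerivAt (WT w₁ w₂) (V t^2 - V t - F t) t := by
        intro t ht
        have h := (hVd t ht).const_add 1
        have heq : (fun u => 1 + V u) = WT w₁ w₂ := funext fun u => (hWTV u).symm
        rwa [heq] at h
      have hlim : Tendsto (fun t => V t^2 - V t - F t) atTop (𝓝 0) := by
        have h := ((hVa.pow 2).sub hVa).sub hFtend
        rwa [hroot] at h
      apply hlim.congr'
      filter_upwards [eventually_ge_atTop T₀] with t ht
      exact ((hWTd t ht).deriv).symm
    · intro z hz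
      have hzρ : z = ρ₀ := tendsto_nhds_unique hz hρ₀
      rw [hzρ]
      linarith

end PaperEss
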